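/- arXiv:2005.05792 — 2 statements merged into one kernel-verified Lean document; each statement's English description precedes it below -/
import Mathlib

section
/- An oriented hypergraph G^σ is incidence balanced if and only if for any two elements a, b of V(G) ∪ E(G), all paths in G^σ from a to b have the same incidence sign. -/
open Matrix BigOperators

variable {V E : Type*}

/-- `M` is the signed edge-vertex incidence matrix of an incidence orientation of the
hypergraph whose incidence relation is `mem` (`mem e v` means `v ∈ e`). -/
def IsOrientation (mem : E → V → Prop) (M : Matrix E V ℝ) : Prop :=
  ∀ e v, (mem e v → M e v = 1 ∨ M e v = -1) ∧ (¬ mem e v → M e v = 0)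

/-- The incidence matrix of the all-positive orientation `G⁺`. -/
def Mplus (mem : E → V → Prop) [∀ e v, Decidable (mem e v)] : Matrix E V ℝ :=
  Matrix.of fun e v => if mem e v then 1 else 0

/-- Vertex switching at `w`: negate all incidence signs at the vertex `w`. -/
def vertexSwitch [DecidableEq V] (M : Matrix E V ℝ) (w : V) : Matrix E V ℝ :=
  Matrix.of fun e v => if v = w then -M e v else M e v

/-- Edge switching at `f`: negate all incidence signs of the edge `f`. -/
def edgeSwitch [DecidableEq E] (M : Matrix E V ℝ) (f : E) : Matrix E V ℝ :=
  Matrix.of fun e v => if e = f then -M e v else M e v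

/-- One switching step: a single vertex switching or a single edge switching. -/
def SwitchStep [DecidableEq V] [DecidableEq E] (M N : Matrix E V ℝ) : Prop :=
  (∃ w, N = vertexSwitch M w) ∨ (∃ f, N = edgeSwitch M f)

/-- Switching equivalence: a finite sequence of vertex and/or edge switchings. -/
def SwitchEquiv [DecidableEq V] [DecidableEq E] : Matrix E V ℝ → Matrix E V ℝ → Prop :=
  Relation.ReflTransGen SwitchStep

/-- Incidence balance: there is a bipartition `{X, Xᶜ}` of the vertices such that every edge
intersects one part exactly in its positively incident vertices and the other part exactly in
its negatively incident vertices (the roles of the parts may vary edge by edge). -/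
def IncBalanced (mem : E → V → Prop) (M : Matrix E V ℝ) : Prop :=
  ∃ X : V → Prop, ∀ e,
    (∀ v, mem e v → (M e v = 1 ↔ X v)) ∨ (∀ v, mem e v → (M e v = 1 ↔ ¬ X v))

/-- The adjacency matrix of an oriented hypergraph:
`a u v = ∑_{e ∋ u,v} σ(e,u)σ(e,v)` for `u ≠ v` and `0` on the diagonal. -/
def adjMat [Fintype E] [DecidableEq V] (M : Matrix E V ℝ) : Matrix V V ℝ :=
  Matrix.of fun u v => if u = v then 0 else ∑ e, M e u * M e v

/-- The diagonal matrix of vertex degrees. -/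
def degMat [Fintype E] [DecidableEq V] (mem : E → V → Prop) [∀ e v, Decidable (mem e v)] :
    Matrix V V ℝ :=
  Matrix.diagonal fun v => ((Finset.univ.filter fun e => mem e v).card : ℝ)

/-- `μ` is a (real) eigenvalue of the real matrix `A`. -/
def IsEigenvalue {n : Type*} [Fintype n] (A : Matrix n n ℝ) (μ : ℝ) : Prop :=
  ∃ x : n → ℝ, x ≠ 0 ∧ A.mulVec x = μ • x

/-- `μ` is a complex eigenvalue of the real matrix `A`. -/
def IsEigenvalueC {n : Type*} [Fintype n] (A : Matrix n n ℝ) (μ : ℂ) : Prop :=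
  ∃ x : n → ℂ, x ≠ 0 ∧ (A.map fun a => (a : ℂ)).mulVec x = μ • x

/-- Spectral radius: the maximum modulus of the (complex) eigenvalues of `A`. -/
noncomputable def specRad {n : Type*} [Fintype n] (A : Matrix n n ℝ) : ℝ :=
  sSup {r | ∃ μ : ℂ, IsEigenvalueC A μ ∧ r = ‖μ‖}

/-- `s` is a singular value of `M`, i.e. a square root of an eigenvalue of `Mᵀ M`. -/
def IsSingularValue [Fintype V] [Fintype E] (M : Matrix E V ℝ) (s : ℝ) : Prop :=
  0 ≤ s ∧ IsEigenvalue (Mᵀ * M) (s ^ 2)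

/-- The maximum singular value of `M`. -/
noncomputable def maxSingularValue [Fintype V] [Fintype E] (M : Matrix E V ℝ) : ℝ :=
  sSup {s | IsSingularValue M s}

/-- The (bipartite) incidence graph of a hypergraph, on vertex set `V ⊕ E`, with an edge
joining `v` and `e` for each incidence `(e, v)`. -/
def incGraph (mem : E → V → Prop) : SimpleGraph (V ⊕ E) where
  Adj x y := (∃ v e, x = Sum.inl v ∧ y = Sum.inr e ∧ mem e v) ∨
             (∃ v e, x = Sum.inr e ∧ y = Sum.inl v ∧ mem e v)
  symm := by
    refine ⟨?_⟩
    rintro x y (⟨v, e, h1, h2, h3⟩ | ⟨v, e, h1, h2, h3⟩)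
    · exact Or.inr ⟨v, e, h2, h1, h3⟩
    · exact Or.inl ⟨v, e, h2, h1, h3⟩
  loopless := by
    refine ⟨?_⟩
    rintro x (⟨v, e, h1, h2, h3⟩ | ⟨v, e, h1, h2, h3⟩) <;> subst h1 <;> simp at h2

/-- A hypergraph is connected if any two elements of `V ∪ E` are joined by a walk,
i.e. its incidence graph is connected. -/
def HConnected (mem : E → V → Prop) : Prop := (incGraph mem).Connected

/-- The sign of an incidence, viewed as an edge of the incidence graph. -/
def pairSign (M : Matrix E V ℝ) : V ⊕ E → V ⊕ E → ℝ
  | Sum.inl v, Sum.inr e => M e v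
  | Sum.inr e, Sum.inl v => M e v
  | _, _ => 1

/-- The incidence sign of a walk (in particular of a path or a cycle) of the oriented
hypergraph, realized as a walk of the incidence graph: the product of the signs of the
incidences traversed. -/
def walkSign {mem : E → V → Prop} (M : Matrix E V ℝ) {x y : V ⊕ E}
    (w : (incGraph mem).Walk x y) : ℝ :=
  (w.darts.map fun d => pairSign M d.toProd.1 d.toProd.2).prod

section AuxSign

open SimpleGraph SimpleGraph.Walk

variable {mem : E → V → Prop} (M : Matrix E V ℝ)

lemma pairSign_symm (x y : V ⊕ E) : pairSign M x y = pairSign M y x := by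
  cases x <;> cases y <;> rfl

lemma pairSign_pm (hM : IsOrientation mem M) {x y : V ⊕ E}
    (h : (incGraph mem).Adj x y) : pairSign M x y = 1 ∨ pairSign M x y = -1 := by
  rcases h with ⟨v, e, rfl, rfl, hm⟩ | ⟨v, e, rfl, rfl, hm⟩ <;> exact (hM e v).1 hm

lemma walkSign_cons {a b c : V ⊕ E} (h : (incGraph mem).Adj a b)
    (w : (incGraph mem).Walk b c) :
    walkSign M (Walk.cons h w) = pairSign M a b * walkSign M w := by
  simp [walkSign]

lemma walkSign_append {a b c : V ⊕ E} (p : (incGraph mem).Walk a b)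
    (q : (incGraph mem).Walk b c) :
    walkSign M (p.append q) = walkSign M p * walkSign M q := by
  simp [walkSign, Walk.darts_append]

lemma walkSign_copy {a b a' b' : V ⊕ E} (p : (incGraph mem).Walk a b)
    (h1 : a = a') (h2 : b = b') :
    walkSign M (p.copy h1 h2) = walkSign M p := by subst h1; subst h2; rfl

lemma walkSign_concat {a b c : V ⊕ E} (p : (incGraph mem).Walk a b)
    (h : (incGraph mem).Adj b c) :
    walkSign M (p.concat h) = walkSign M p * pairSign M b c := by
  simp [walkSign, Walk.darts_concat]

lemma walkSign_pm (hM : IsOrientation mem M) {a b : V ⊕ E}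
    (w : (incGraph mem).Walk a b) :
    walkSign M w = 1 ∨ walkSign M w = -1 := by
  induction w with
  | nil => exact Or.inl rfl
  | cons h w ih =>
    rw [walkSign_cons]
    rcases pairSign_pm M hM h with h1 | h1 <;> rcases ih with h2 | h2 <;>
      rw [h1, h2] <;> norm_num

/-- a representative of the connected component of `x` in the incidence graph -/
noncomputable def hrep (mem : E → V → Prop) (x : V ⊕ E) : V ⊕ E :=
  Quot.out ((incGraph mem).connectedComponentMk x)

lemma reachable_hrep (mem : E → V → Prop) (x : V ⊕ E) :
    (incGraph mem).Reachable (hrep mem x) x :=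
  SimpleGraph.ConnectedComponent.exact (Quot.out_eq _)

lemma hrep_eq_of_adj {x y : V ⊕ E} (h : (incGraph mem).Adj x y) :
    hrep mem x = hrep mem y := by
  unfold hrep
  rw [SimpleGraph.ConnectedComponent.sound h.reachable]

/-- a chosen path from the representative to `x` -/
noncomputable def cpath (mem : E → V → Prop) (x : V ⊕ E) :
    (incGraph mem).Path (hrep mem x) x :=
  letI := Classical.decEq (V ⊕ E)
  (Classical.choice (reachable_hrep mem x)).toPath

/-- the potential function defined by the chosen paths -/
noncomputable def phiPot (mem : E → V → Prop) (M : Matrix E V ℝ) (x : V ⊕ E) : ℝ :=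
  walkSign M (cpath mem x).1

lemma phiPot_pm (hM : IsOrientation mem M) (x : V ⊕ E) :
    phiPot mem M x = 1 ∨ phiPot mem M x = -1 :=
  walkSign_pm M hM _

lemma phiPot_adj (hM : IsOrientation mem M)
    (H : ∀ (a b : V ⊕ E) (p q : (incGraph mem).Walk a b),
        p.IsPath → q.IsPath → walkSign M p = walkSign M q)
    {x y : V ⊕ E} (h : (incGraph mem).Adj x y) :
    phiPot mem M y = phiPot mem M x * pairSign M x y := by
  classical
  have hrxy : hrep mem x = hrep mem y := hrep_eq_of_adj h
  set p : (incGraph mem).Walk (hrep mem x) x := (cpath mem x).1 with hpdef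
  have hp : p.IsPath := (cpath mem x).2
  have hps : walkSign M p = phiPot mem M x := rfl
  have hsq : pairSign M x y * pairSign M x y = 1 := by
    rcases pairSign_pm M hM h with h1 | h1 <;> rw [h1] <;> norm_num
  rcases Classical.em (y ∈ p.support) with hy | hy
  · -- split p at y
    have h1 : (p.takeUntil y hy).IsPath := hp.takeUntil hy
    have h2 : (p.dropUntil y hy).IsPath := hp.dropUntil hy
    have e1 : phiPot mem M y = walkSign M (p.takeUntil y hy) := by
      have := H (hrep mem y) y (cpath mem y).1 ((p.takeUntil y hy).copy hrxy rfl)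
        (cpath mem y).2 ((Walk.isPath_copy _ _ _).2 h1)
      rw [walkSign_copy] at this
      exact this
    -- the single edge walk from y to x
    have hyx : y ≠ x := h.ne'
    have hsingle : (Walk.cons h.symm Walk.nil : (incGraph mem).Walk y x).IsPath :=
      Walk.IsPath.nil.cons (by simp [hyx])
    have e2 : walkSign M (p.dropUntil y hy) = pairSign M x y := by
      have := H y x (p.dropUntil y hy) (Walk.cons h.symm Walk.nil) h2 hsingle
      rw [walkSign_cons] at this
      rw [this, pairSign_symm]
      simp [walkSign]
    have e3 : phiPot mem M x = walkSign M (p.takeUntil y hy) * walkSign M (p.dropUntil y hy) := by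
      rw [← hps]
      conv_lhs => rw [← p.take_spec hy]
      rw [walkSign_append]
    rw [e3, e2, e1, mul_assoc, hsq, mul_one]
  · -- extend p by the edge xy
    have hcp : (p.concat h).IsPath := by
      rw [← Walk.isPath_reverse_iff, Walk.reverse_concat]
      refine hp.reverse.cons ?_
      rw [Walk.support_reverse, List.mem_reverse]
      exact hy
    have e1 : phiPot mem M y = walkSign M (p.concat h) := by
      have := H (hrep mem y) y (cpath mem y).1 ((p.concat h).copy hrxy rfl)
        (cpath mem y).2 ((Walk.isPath_copy _ _ _).2 hcp)
      rw [walkSign_copy] at this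
      exact this
    rw [e1, walkSign_concat, hps]

lemma phiPot_incidence (hM : IsOrientation mem M)
    (H : ∀ (a b : V ⊕ E) (p q : (incGraph mem).Walk a b),
        p.IsPath → q.IsPath → walkSign M p = walkSign M q)
    {e : E} {v : V} (hv : mem e v) :
    M e v = phiPot mem M (Sum.inl v) * phiPot mem M (Sum.inr e) := by
  have hadj : (incGraph mem).Adj (Sum.inl v) (Sum.inr e) := Or.inl ⟨v, e, rfl, rfl, hv⟩
  have h1 := phiPot_adj M hM H hadj
  have h2 : pairSign M (Sum.inl v) (Sum.inr e) = M e v := rfl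
  rw [h2] at h1
  rcases phiPot_pm M hM (Sum.inl v : V ⊕ E) with h3 | h3 <;> rw [h3] at h1 ⊢ <;> linarith

end AuxSign

/-- `G^σ` is incidence balanced iff for any two elements `a, b` of `V ∪ E`,
all paths from `a` to `b` have the same incidence sign. -/
theorem incBalanced_iff_paths_same_sign
    (mem : E → V → Prop) (M : Matrix E V ℝ) (hM : IsOrientation mem M) :
    IncBalanced mem M ↔
      ∀ (a b : V ⊕ E) (p q : (incGraph mem).Walk a b),
        p.IsPath → q.IsPath → walkSign M p = walkSign M q := by
  classical
  constructor
  · rintro ⟨X, hX⟩ a b p q hp hq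
    -- potential function coming from the balance
    set f : V ⊕ E → ℝ := Sum.elim (fun v => if X v then 1 else -1)
      (fun e => if (∀ v, mem e v → (M e v = 1 ↔ X v)) then 1 else -1) with hf
    have fpm : ∀ x, f x = 1 ∨ f x = -1 := by
      rintro (v | e)
      · by_cases h : X v
        · exact Or.inl (by rw [hf]; simp only [Sum.elim_inl]; rw [if_pos h])
        · exact Or.inr (by rw [hf]; simp only [Sum.elim_inl]; rw [if_neg h])
      · by_cases h : ∀ v, mem e v → (M e v = 1 ↔ X v)
        · exact Or.inl (by rw [hf]; simp only [Sum.elim_inr]; rw [if_pos h])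
        · exact Or.inr (by rw [hf]; simp only [Sum.elim_inr]; rw [if_neg h])
    have fadj : ∀ {x y : V ⊕ E}, (incGraph mem).Adj x y →
        pairSign M x y = f x * f y := by
      have base : ∀ (e : E) (v : V), mem e v →
          M e v = (if X v then (1:ℝ) else -1) *
            (if (∀ v, mem e v → (M e v = 1 ↔ X v)) then (1:ℝ) else -1) := by
        intro e v hv
        by_cases hP : ∀ v, mem e v → (M e v = 1 ↔ X v)
        · rw [if_pos hP, mul_one]
          by_cases hXv : X v
          · rw [if_pos hXv]; exact (hP v hv).2 hXv
          · rw [if_neg hXv]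
            rcases (hM e v).1 hv with h1 | h1
            · exact absurd ((hP v hv).1 h1) hXv
            · exact h1
        · have hQ : ∀ v, mem e v → (M e v = 1 ↔ ¬ X v) := (hX e).resolve_left hP
          rw [if_neg hP]
          by_cases hXv : X v
          · rw [if_pos hXv]
            rcases (hM e v).1 hv with h1 | h1
            · exact absurd ((hQ v hv).1 h1) (not_not_intro hXv)
            · rw [h1]; ring
          · rw [if_neg hXv, (hQ v hv).2 hXv]; ring
      rintro x y (⟨v, e, rfl, rfl, hm⟩ | ⟨v, e, rfl, rfl, hm⟩)
      · simpa [hf, pairSign] using base e v hm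
      · have := base e v hm
        simp only [hf, pairSign, Sum.elim_inl, Sum.elim_inr]
        rw [this]; ring
    have key : ∀ (a b : V ⊕ E) (w : (incGraph mem).Walk a b),
        walkSign M w = f a * f b := by
      intro a b w
      induction w with
      | @nil u =>
        show (1:ℝ) = f u * f u
        rcases fpm u with h | h <;> rw [h] <;> norm_num
      | @cons u c d h w ih =>
        rw [walkSign_cons, ih, fadj h]
        rcases fpm c with h2 | h2 <;> rw [h2] <;> ring
    rw [key a b p, key a b q]
  · intro H
    refine ⟨fun v => phiPot mem M (Sum.inl v) = 1, fun e => ?_⟩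
    rcases phiPot_pm M hM (Sum.inr e : V ⊕ E) with he | he
    · left
      intro v hv
      have hk := phiPot_incidence M hM H hv
      rw [he, mul_one] at hk
      rw [hk]
    · right
      intro v hv
      have hk := phiPot_incidence M hM H hv
      rw [he] at hk
      show M e v = 1 ↔ ¬ (phiPot mem M (Sum.inl v) = 1)
      rcases phiPot_pm M hM (Sum.inl v : V ⊕ E) with h3 | h3 <;>
        rw [h3] at hk <;> norm_num at hk <;> simp [hk, h3] <;> norm_num
end

section
/- Let G^σ be a connected k-uniform oriented hypergraph with k even and ΓG^σ its induced signed hypergraph. Then 0 is an H-eigenvalue of the Laplacian tensor L(ΓG^σ) if and only if there is a bipartition {V^+, V^-} of V(G) such that each positive edge intersects V^- in an odd number of vertices and each negative edge intersects V^- in an even number of vertices. -/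
open BigOperators

variable {V : Type*}

/-- The adjacency tensor of a signed `k`-uniform hypergraph with edge set `E` and edge signs
`γ`: the entry at a tuple whose underlying vertex set is an edge `e` is `γ(e)/(k-1)!`,
and all other entries are `0`. -/
noncomputable def adjT (R : Type*) [Field R] [Fintype V] [DecidableEq V] (k : ℕ)
    (E : Finset (Finset V)) (γ : Finset V → R) : (Fin k → V) → R :=
  fun i => if Finset.image i Finset.univ ∈ E
    then γ (Finset.image i Finset.univ) / (Nat.factorial (k - 1) : R) else 0

/-- `(lam, x)` is an eigenpair of the order-`k` tensor `A`:
`x ≠ 0` and `(A x^{k-1})_v = lam * x_v^{k-1}` for every `v`. -/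
def IsTensorEigenpair (R : Type*) [CommRing R] [Fintype V] [DecidableEq V] (k : ℕ) [NeZero k]
    (A : (Fin k → V) → R) (lam : R) (x : V → R) : Prop :=
  x ≠ 0 ∧ ∀ v : V,
    (∑ i : Fin k → V, if i 0 = v
      then A i * ∏ j ∈ Finset.univ.filter (fun j : Fin k => j ≠ 0), x (i j) else 0)
    = lam * x v ^ (k - 1)

/-- The spectral radius of a real order-`k` tensor: the supremum of the moduli of its
(complex) eigenvalues. -/
noncomputable def tSpecRad [Fintype V] [DecidableEq V] (k : ℕ) [NeZero k]
    (A : (Fin k → V) → ℝ) : ℝ :=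
  sSup {r | ∃ lam : ℂ,
    (∃ x : V → ℂ, IsTensorEigenpair ℂ k (fun i => ((A i : ℝ) : ℂ)) lam x) ∧
      r = ‖lam‖}

/-- One vertex switching on a signed hypergraph: negate the sign of every edge containing `w`. -/
def VSwitchStep [DecidableEq V] (γ δ : Finset V → ℝ) : Prop :=
  ∃ w : V, ∀ e, δ e = if w ∈ e then -γ e else γ e

/-- Two signed hypergraphs (with common edge set `E`) are switching equivalent if one is
obtained from the other by a finite sequence of vertex switchings (signs off `E` are
irrelevant). -/
def SignedSwitchEquiv [DecidableEq V] (E : Finset (Finset V)) (γ γ' : Finset V → ℝ) : Prop :=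
  ∃ δ, Relation.ReflTransGen VSwitchStep γ δ ∧ ∀ e ∈ E, δ e = γ' e

/-- The action `S T S` of a signature matrix (diagonal ±1 matrix) `S` on an order-`k` tensor:
`(S T S)_{i_1…i_k} = S_{i_1 i_1} t_{i_1…i_k} S_{i_2 i_2} ⋯ S_{i_k i_k}`. -/
def conjT (R : Type*) [CommRing R] [DecidableEq V] (k : ℕ) [NeZero k] [Fintype V]
    (S : V → R) (A : (Fin k → V) → R) : (Fin k → V) → R :=
  fun i => S (i 0) * A i * ∏ j ∈ Finset.univ.filter (fun j : Fin k => j ≠ 0), S (i j)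

/-- The diagonal degree tensor `D(G)` of the hypergraph with edge set `E`:
`d_{v…v} = deg v`, all other entries `0`. -/
noncomputable def degT [Fintype V] [DecidableEq V] (k : ℕ) [NeZero k]
    (E : Finset (Finset V)) : (Fin k → V) → ℝ :=
  fun i => if ∀ j, i j = i 0 then ((E.filter fun e => i 0 ∈ e).card : ℝ) else 0

/-- The Laplacian tensor `L(Γ) = D(G) + A(Γ)` of a signed `k`-uniform hypergraph. -/
noncomputable def lapT [Fintype V] [DecidableEq V] (k : ℕ) [NeZero k]
    (E : Finset (Finset V)) (γ : Finset V → ℝ) : (Fin k → V) → ℝ :=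
  fun i => degT k E i + adjT ℝ k E γ i

/-- `σ` is an incidence orientation of the hypergraph with edge set `E`: each incidence
`(e, v)` with `v ∈ e ∈ E` is labeled `+1` or `-1`. -/
def IsIncidenceOrientation (E : Finset (Finset V)) (σ : Finset V → V → ℝ) : Prop :=
  ∀ e ∈ E, ∀ v ∈ e, σ e v = 1 ∨ σ e v = -1

/-- The edge signs of the signed hypergraph `ΓG^σ` induced by an orientation `σ`:
`sgn_σ(e) = (-1)^{|e|-1} ∏_{v ∈ e} σ(e,v)` (for `k`-uniform edges, `|e| = k`). -/
def inducedSign [DecidableEq V] (k : ℕ) (σ : Finset V → V → ℝ) : Finset V → ℝ :=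
  fun e => (-1 : ℝ) ^ (k - 1) * ∏ v ∈ e, σ e v

/-- The incidence graph of the hypergraph with edge set `E`. -/
def hIncGraph [DecidableEq V] (E : Finset (Finset V)) : SimpleGraph (V ⊕ {e // e ∈ E}) where
  Adj x y := (∃ v e, x = Sum.inl v ∧ y = Sum.inr e ∧ v ∈ e.1) ∨
             (∃ v e, x = Sum.inr e ∧ y = Sum.inl v ∧ v ∈ e.1)
  symm := by
    constructor
    rintro x y (⟨v, e, h1, h2, h3⟩ | ⟨v, e, h1, h2, h3⟩)
    · exact Or.inr ⟨v, e, h2, h1, h3⟩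
    · exact Or.inl ⟨v, e, h2, h1, h3⟩
  loopless := by
    constructor
    rintro x (⟨v, e, h1, h2, h3⟩ | ⟨v, e, h1, h2, h3⟩) <;> subst h1 <;> simp at h2

/-- A hypergraph is connected if any two elements of `V ∪ E` are joined by a walk. -/
def HConnectedF [DecidableEq V] (E : Finset (Finset V)) : Prop := (hIncGraph E).Connected

/-! ### Auxiliary lemmas -/

section AuxLemmas

set_option linter.unusedSectionVars false

variable [Fintype V] [DecidableEq V]

lemma inj_of_image' (k : ℕ) {i : Fin k → V} {s : Finset V} (hs : s.card = k)
    (him : Finset.image i Finset.univ = s) : Function.Injective i := by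
  have h : (Finset.image i Finset.univ).card = (Finset.univ : Finset (Fin k)).card := by
    rw [him, hs, Finset.card_univ, Fintype.card_fin]
  have h2 := Finset.card_image_iff.mp h
  intro a b hab
  exact h2 (Finset.mem_coe.mpr (Finset.mem_univ a)) (Finset.mem_coe.mpr (Finset.mem_univ b)) hab

lemma mem_of_image' {k : ℕ} {i : Fin k → V} {s : Finset V}
    (him : Finset.image i Finset.univ = s) (j : Fin k) : i j ∈ s :=
  him ▸ Finset.mem_image_of_mem _ (Finset.mem_univ _)

lemma card_tuples (k : ℕ) [NeZero k] (s : Finset V) (hs : s.card = k) (v : V) (hv : v ∈ s) :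
    (Finset.univ.filter (fun i : Fin k → V => i 0 = v ∧ Finset.image i Finset.univ = s)).card
      = (k - 1).factorial := by
  have hcard1 : Fintype.card {j : Fin k // j ≠ 0} = k - 1 := by
    simp [Fintype.card_subtype_compl]
  have hcard2 : Fintype.card (s.erase v : Finset V) = k - 1 := by
    rw [Fintype.card_coe, Finset.card_erase_of_mem hv, hs]
  have memF : ∀ (i : {i : Fin k → V // i 0 = v ∧ Finset.image i Finset.univ = s})
      (j : {j : Fin k // j ≠ 0}), i.1 j.1 ∈ s.erase v := by
    intro i j
    refine Finset.mem_erase.mpr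
      ⟨fun hEq => j.2 (inj_of_image' k hs i.2.2 (by rw [hEq, i.2.1])), ?_⟩
    exact mem_of_image' i.2.2 j.1
  have hbij : ∀ i : {i : Fin k → V // i 0 = v ∧ Finset.image i Finset.univ = s},
      Function.Bijective (fun j : {j : Fin k // j ≠ 0} =>
        (⟨i.1 j.1, memF i j⟩ : (s.erase v : Finset V))) := by
    intro i
    rw [Fintype.bijective_iff_injective_and_card]
    refine ⟨fun a b hab => Subtype.ext (inj_of_image' k hs i.2.2 ?_), hcard1.trans hcard2.symm⟩
    simpa using congrArg Subtype.val hab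
  have E : {i : Fin k → V // i 0 = v ∧ Finset.image i Finset.univ = s}
      ≃ ({j : Fin k // j ≠ 0} ≃ (s.erase v : Finset V)) := by
    refine
      { toFun := fun i => Equiv.ofBijective _ (hbij i)
        invFun := fun E' => ⟨fun j => if h : j = 0 then v else (E' ⟨j, h⟩ : V), dif_pos rfl, ?_⟩
        left_inv := ?_
        right_inv := ?_ }
    · ext u
      simp only [Finset.mem_image, Finset.mem_univ, true_and]
      constructor
      · rintro ⟨j, rfl⟩
        split
        · exact hv
        · next h => exact Finset.mem_of_mem_erase (E' ⟨j, h⟩).2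
      · intro hu
        by_cases huv : u = v
        · exact ⟨0, by rw [dif_pos rfl, huv]⟩
        · obtain ⟨j, hj⟩ := E'.surjective ⟨u, Finset.mem_erase.mpr ⟨huv, hu⟩⟩
          refine ⟨j.1, ?_⟩
          rw [dif_neg j.2, Subtype.eta, hj]
    · intro i
      apply Subtype.ext
      funext j
      by_cases h : j = 0
      · simpa [h] using i.2.1.symm
      · simp [h, Equiv.ofBijective]
    · intro E'
      apply Equiv.ext
      intro j
      apply Subtype.ext
      simp only [Equiv.ofBijective, Equiv.coe_fn_mk]
      rw [dif_neg j.2, Subtype.eta]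
  have hc := Fintype.card_congr E
  rw [Fintype.card_equiv (Fintype.equivOfCardEq (hcard1.trans hcard2.symm)), hcard1] at hc
  rw [← hc, Fintype.card_subtype]

lemma card_filter_ne_zero (k : ℕ) [NeZero k] :
    (Finset.univ.filter (fun j : Fin k => j ≠ 0)).card = k - 1 := by
  rw [Finset.filter_ne', Finset.card_erase_of_mem (Finset.mem_univ _), Finset.card_univ,
    Fintype.card_fin]

lemma prod_tail (k : ℕ) [NeZero k] {v : V} {i : Fin k → V} {s : Finset V} (hs : s.card = k)
    (h0 : i 0 = v) (him : Finset.image i Finset.univ = s) (x : V → ℝ) :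
    ∏ j ∈ Finset.univ.filter (fun j : Fin k => j ≠ 0), x (i j)
      = ∏ u ∈ s.erase v, x u := by
  have hinj := inj_of_image' k hs him
  have himage : Finset.image i (Finset.univ.filter (fun j : Fin k => j ≠ 0)) = s.erase v := by
    apply Finset.eq_of_subset_of_card_le
    · intro u hu
      obtain ⟨j, hj, rfl⟩ := Finset.mem_image.mp hu
      have hj' : j ≠ 0 := (Finset.mem_filter.mp hj).2
      exact Finset.mem_erase.mpr ⟨fun hEq => hj' (hinj (by rw [hEq, h0])), mem_of_image' him j⟩
    · rw [Finset.card_erase_of_mem (h0 ▸ mem_of_image' him 0), hs,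
        Finset.card_image_of_injective _ hinj, card_filter_ne_zero]
  rw [← himage, Finset.prod_image (fun a _ b _ hab => hinj hab)]

lemma sum_tuples_edge (k : ℕ) [NeZero k] (s : Finset V) (hs : s.card = k) (v : V) (x : V → ℝ) :
    (∑ i : Fin k → V, if i 0 = v ∧ Finset.image i Finset.univ = s
        then ∏ j ∈ Finset.univ.filter (fun j : Fin k => j ≠ 0), x (i j) else 0)
      = if v ∈ s then ((k-1).factorial : ℝ) * ∏ u ∈ s.erase v, x u else 0 := by
  rw [← Finset.sum_filter]
  by_cases hv : v ∈ s
  · rw [if_pos hv]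
    rw [Finset.sum_congr rfl (fun i hi => ?_), Finset.sum_const, card_tuples k s hs v hv,
      nsmul_eq_mul]
    · exact prod_tail k hs (Finset.mem_filter.mp hi).2.1 (Finset.mem_filter.mp hi).2.2 x
  · rw [if_neg hv]
    apply Finset.sum_eq_zero
    intro i hi
    obtain ⟨-, h0, him⟩ := Finset.mem_filter.mp hi
    exact absurd (h0 ▸ mem_of_image' him 0) hv

lemma sum_deg (k : ℕ) [NeZero k] (E : Finset (Finset V)) (v : V) (x : V → ℝ) :
    (∑ i : Fin k → V, if i 0 = v
        then degT k E i * ∏ j ∈ Finset.univ.filter (fun j : Fin k => j ≠ 0), x (i j) else 0)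
      = ((E.filter fun e => v ∈ e).card : ℝ) * x v ^ (k - 1) := by
  have key : ∀ i : Fin k → V,
      (if i 0 = v
        then degT k E i * ∏ j ∈ Finset.univ.filter (fun j : Fin k => j ≠ 0), x (i j) else 0)
      = if (fun _ => v) = i then ((E.filter fun e => v ∈ e).card : ℝ) * x v ^ (k - 1) else 0 := by
    intro i
    by_cases hc : (fun _ => v) = i
    · have h0 : i 0 = v := by rw [← hc]
      have hall : ∀ j, i j = i 0 := by intro j; rw [← hc]
      rw [if_pos h0, if_pos hc, degT, if_pos hall, h0]
      congr 1
      rw [Finset.prod_congr rfl (fun j _ => by rw [← hc]), Finset.prod_const,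
        card_filter_ne_zero]
    · by_cases h0 : i 0 = v
      · rw [if_pos h0, if_neg hc, degT]
        rw [if_neg, zero_mul]
        intro hall
        exact hc (funext fun j => by rw [hall j, h0])
      · rw [if_neg h0, if_neg hc]
  rw [Finset.sum_congr rfl (fun i _ => key i), Finset.sum_ite_eq]
  simp

lemma sum_adj (k : ℕ) [NeZero k] (E : Finset (Finset V)) (hE : ∀ e ∈ E, e.card = k)
    (γ : Finset V → ℝ) (v : V) (x : V → ℝ) :
    (∑ i : Fin k → V, if i 0 = v
        then adjT ℝ k E γ i * ∏ j ∈ Finset.univ.filter (fun j : Fin k => j ≠ 0), x (i j) else 0)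
      = ∑ e ∈ E.filter (fun e => v ∈ e), γ e * ∏ u ∈ e.erase v, x u := by
  have key : ∀ i : Fin k → V,
      (if i 0 = v
        then adjT ℝ k E γ i * ∏ j ∈ Finset.univ.filter (fun j : Fin k => j ≠ 0), x (i j) else 0)
      = ∑ e ∈ E, if i 0 = v ∧ Finset.image i Finset.univ = e
          then (γ e / ((k-1).factorial : ℝ))
            * ∏ j ∈ Finset.univ.filter (fun j : Fin k => j ≠ 0), x (i j) else 0 := by
    intro i
    by_cases h0 : i 0 = v
    · simp only [h0, true_and, if_true, adjT]
      rw [show (∑ e ∈ E, if Finset.image i Finset.univ = e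
          then (γ e / ((k-1).factorial : ℝ))
            * ∏ j ∈ Finset.univ.filter (fun j : Fin k => j ≠ 0), x (i j) else 0)
        = if Finset.image i Finset.univ ∈ E
          then (γ (Finset.image i Finset.univ) / ((k-1).factorial : ℝ))
            * ∏ j ∈ Finset.univ.filter (fun j : Fin k => j ≠ 0), x (i j) else 0
        from Finset.sum_ite_eq E _ _]
      split
      · ring
      · rw [zero_mul]
    · simp [h0]
  rw [Finset.sum_congr rfl (fun i _ => key i), Finset.sum_comm, Finset.sum_filter]
  apply Finset.sum_congr rfl
  intro e he
  have hconst : (∑ i : Fin k → V, if i 0 = v ∧ Finset.image i Finset.univ = e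
      then (γ e / ((k-1).factorial : ℝ))
        * ∏ j ∈ Finset.univ.filter (fun j : Fin k => j ≠ 0), x (i j) else 0)
    = (γ e / ((k-1).factorial : ℝ)) * ∑ i : Fin k → V,
        (if i 0 = v ∧ Finset.image i Finset.univ = e
          then ∏ j ∈ Finset.univ.filter (fun j : Fin k => j ≠ 0), x (i j) else 0) := by
    rw [Finset.mul_sum]
    exact Finset.sum_congr rfl (fun i _ => by split <;> simp)
  rw [hconst, sum_tuples_edge k e (hE e he) v x]
  have hfac : ((k-1).factorial : ℝ) ≠ 0 := Nat.cast_ne_zero.mpr (Nat.factorial_ne_zero _)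
  by_cases hv : v ∈ e
  · rw [if_pos hv, if_pos hv]
    field_simp
  · rw [if_neg hv, if_neg hv, mul_zero]

/-- Characterization of `0` being an H-eigenvalue via the per-vertex equations. -/
lemma eigen_zero_iff (k : ℕ) [NeZero k] (E : Finset (Finset V))
    (hE : ∀ e ∈ E, e.card = k) (γ : Finset V → ℝ) (x : V → ℝ) :
    IsTensorEigenpair ℝ k (lapT k E γ) 0 x ↔ x ≠ 0 ∧ ∀ v : V,
      ((E.filter fun e => v ∈ e).card : ℝ) * x v ^ (k-1)
        + ∑ e ∈ E.filter (fun e => v ∈ e), γ e * ∏ u ∈ e.erase v, x u = 0 := by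
  unfold IsTensorEigenpair
  refine and_congr_right fun _ => forall_congr' fun v => ?_
  rw [zero_mul]
  have hsplit : (∑ i : Fin k → V, if i 0 = v
      then lapT k E γ i * ∏ j ∈ Finset.univ.filter (fun j : Fin k => j ≠ 0), x (i j) else 0)
    = (∑ i : Fin k → V, if i 0 = v
        then degT k E i * ∏ j ∈ Finset.univ.filter (fun j : Fin k => j ≠ 0), x (i j) else 0)
      + (∑ i : Fin k → V, if i 0 = v
        then adjT ℝ k E γ i * ∏ j ∈ Finset.univ.filter (fun j : Fin k => j ≠ 0), x (i j) else 0) := by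
    rw [← Finset.sum_add_distrib]
    exact Finset.sum_congr rfl fun i _ => by
      by_cases h : i 0 = v <;> simp [h, lapT, add_mul]
  rw [hsplit, sum_deg k E v x, sum_adj k E hE γ v x]

lemma neg_one_pow_eq_neg_one_iff_odd' (c : ℕ) : ((-1:ℝ)^c = -1) ↔ Odd c := by
  rcases Nat.even_or_odd c with h | h
  · rw [h.neg_one_pow]
    simp [Nat.not_odd_iff_even.mpr h]
    norm_num
  · rw [h.neg_one_pow]
    simp [h]

lemma cond_iff {g : ℝ} (hs : g = 1 ∨ g = -1) (c : ℕ) :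
    ((g = 1 → Odd c) ∧ (g = -1 → Even c)) ↔ g * (-1:ℝ)^c = -1 := by
  rcases hs with rfl | rfl
  · rw [one_mul, neg_one_pow_eq_neg_one_iff_odd']
    constructor
    · exact fun h => h.1 rfl
    · exact fun h => ⟨fun _ => h, fun h1 => absurd h1 (by norm_num)⟩
  · rw [show (-1:ℝ) * (-1)^c = -1 ↔ (-1:ℝ)^c = 1 by constructor <;> intro h <;> linarith,
      neg_one_pow_eq_one_iff_even (by norm_num)]
    constructor
    · exact fun h => h.2 rfl
    · exact fun h => ⟨fun h1 => absurd h1 (by norm_num), fun _ => h⟩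

lemma prod_sign {x : V → ℝ} {m : ℝ} (e : Finset V) (h : ∀ u ∈ e, |x u| = m) :
    ∏ u ∈ e, x u = (-1:ℝ)^((e.filter (fun u => x u < 0)).card) * m ^ e.card := by
  have key : ∀ u ∈ e, x u = (if x u < 0 then (-1:ℝ) else 1) * m := by
    intro u hu
    by_cases hneg : x u < 0
    · rw [if_pos hneg, neg_one_mul, ← h u hu, abs_of_neg hneg, neg_neg]
    · rw [if_neg hneg, one_mul, ← h u hu, abs_of_nonneg (not_lt.mp hneg)]
  rw [Finset.prod_congr rfl key, Finset.prod_mul_distrib, Finset.prod_const]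
  congr 1
  rw [← Finset.prod_filter_mul_prod_filter_not e (fun u => x u < 0)]
  rw [Finset.prod_congr rfl (fun u hu => if_pos (Finset.mem_filter.mp hu).2),
    Finset.prod_congr rfl (fun u hu => if_neg (Finset.mem_filter.mp hu).2),
    Finset.prod_const, Finset.prod_const, one_pow, mul_one]

lemma inter_filter_eq (e : Finset V) (p : V → Prop) [DecidablePred p] :
    e ∩ Finset.univ.filter p = e.filter p := by
  ext u; simp [Finset.mem_filter, Finset.mem_inter]

lemma sign_pm {E : Finset (Finset V)} {σ : Finset V → V → ℝ} (k : ℕ)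
    (hσ : IsIncidenceOrientation E σ) {e : Finset V} (he : e ∈ E) :
    inducedSign k σ e = 1 ∨ inducedSign k σ e = -1 := by
  have hprod : (∏ v ∈ e, σ e v) = 1 ∨ (∏ v ∈ e, σ e v) = -1 := by
    refine Finset.prod_induction _ (fun r => r = 1 ∨ r = -1) ?_ (Or.inl rfl) (hσ e he)
    rintro a b (rfl | rfl) (rfl | rfl) <;> norm_num
  have hpow : ((-1:ℝ) ^ (k-1) = 1) ∨ ((-1:ℝ)^(k-1) = -1) := by
    rcases Nat.even_or_odd (k-1) with h | h
    · exact Or.inl h.neg_one_pow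
    · exact Or.inr h.neg_one_pow
  unfold inducedSign
  rcases hprod with h1 | h1 <;> rcases hpow with h2 | h2 <;> rw [h1, h2] <;> norm_num

lemma nonempty_V {k : ℕ} [NeZero k] {E : Finset (Finset V)}
    (hE : ∀ e ∈ E, e.card = k) (hconn : HConnectedF E) : Nonempty V := by
  obtain ⟨a⟩ := hconn.nonempty
  rcases a with v | e
  · exact ⟨v⟩
  · have h1 := hE e.1 e.2
    have hpos : 0 < e.1.card := h1 ▸ Nat.pos_of_ne_zero (NeZero.ne k)
    obtain ⟨v, -⟩ := Finset.card_pos.mp hpos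
    exact ⟨v⟩

lemma walk_prop {E : Finset (Finset V)} (S : V → Prop)
    (hclose : ∀ v, S v → ∀ e : {e // e ∈ E}, v ∈ e.1 → ∀ u ∈ e.1, S u)
    {a b : V ⊕ {e // e ∈ E}} (p : (hIncGraph E).Walk a b)
    (ha : Sum.elim S (fun e => ∀ u ∈ e.1, S u) a) :
    Sum.elim S (fun e => ∀ u ∈ e.1, S u) b := by
  induction p with
  | nil => exact ha
  | cons h p ih =>
    apply ih
    rcases h with ⟨v, e, h1, h2, h3⟩ | ⟨v, e, h1, h2, h3⟩
    · subst h1; subst h2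
      exact hclose v ha e h3
    · subst h1; subst h2
      exact ha v h3

/-- Forward direction: an eigenvector for `0` yields the bipartition. -/
lemma forward_bip (k : ℕ) [NeZero k] (hk : Even k)
    (E : Finset (Finset V)) (hE : ∀ e ∈ E, e.card = k) (hconn : HConnectedF E)
    (γ : Finset V → ℝ) (hsign : ∀ e ∈ E, γ e = 1 ∨ γ e = -1)
    (x : V → ℝ) (hx : x ≠ 0)
    (heq : ∀ v : V, ((E.filter fun e => v ∈ e).card : ℝ) * x v ^ (k-1)
        + ∑ e ∈ E.filter (fun e => v ∈ e), γ e * ∏ u ∈ e.erase v, x u = 0) :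
    ∃ Vm : Finset V, ∀ e ∈ E, γ e * (-1:ℝ)^((e ∩ Vm).card) = -1 := by
  have : Nonempty V := nonempty_V hE hconn
  obtain ⟨v₀, -, hmax'⟩ := Finset.exists_max_image Finset.univ (fun v => |x v|)
    Finset.univ_nonempty
  set m := |x v₀| with hm
  have hmax : ∀ v, |x v| ≤ m := fun v => hmax' v (Finset.mem_univ v)
  have m_pos : 0 < m := by
    obtain ⟨w, hw⟩ := Function.ne_iff.mp hx
    exact lt_of_lt_of_le (abs_pos.mpr hw) (hmax w)
  have hk1 : k - 1 + 1 = k := Nat.succ_pred_eq_of_pos (Nat.pos_of_ne_zero (NeZero.ne k))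
  -- the closure step
  have hstep : ∀ v, |x v| = m → ∀ e ∈ E, v ∈ e → ∀ u ∈ e, |x u| = m := by
    intro v hv e he hve u hu
    have h1 := heq v
    set F := E.filter (fun e => v ∈ e) with hF
    have heF : e ∈ F := Finset.mem_filter.mpr ⟨he, hve⟩
    have hcardE : ∀ e' ∈ F, (e'.erase v).card = k - 1 := by
      intro e' he'
      obtain ⟨he'E, hve'⟩ := Finset.mem_filter.mp he'
      rw [Finset.card_erase_of_mem hve', hE e' he'E]
    have hle : ∀ e' ∈ F, ∏ u' ∈ e'.erase v, |x u'| ≤ m^(k-1) := by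
      intro e' he'
      calc ∏ u' ∈ e'.erase v, |x u'| ≤ ∏ _u' ∈ e'.erase v, m :=
            Finset.prod_le_prod (fun _ _ => abs_nonneg _) (fun u' _ => hmax u')
        _ = m^(k-1) := by rw [Finset.prod_const, hcardE e' he']
    have habs : (F.card : ℝ) * m^(k-1) ≤ ∑ e' ∈ F, ∏ u' ∈ e'.erase v, |x u'| := by
      have e1 : (F.card : ℝ) * m^(k-1) = |(F.card : ℝ) * x v ^(k-1)| := by
        rw [abs_mul, abs_pow, hv, Nat.abs_cast]
      have e2 : (F.card : ℝ) * x v ^ (k-1)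
          = -( ∑ e' ∈ F, γ e' * ∏ u' ∈ e'.erase v, x u') := by linarith [h1]
      rw [e1, e2, abs_neg]
      calc |∑ e' ∈ F, γ e' * ∏ u' ∈ e'.erase v, x u'|
          ≤ ∑ e' ∈ F, |γ e' * ∏ u' ∈ e'.erase v, x u'| := Finset.abs_sum_le_sum_abs _ _
        _ = ∑ e' ∈ F, ∏ u' ∈ e'.erase v, |x u'| := by
            apply Finset.sum_congr rfl
            intro e' he'
            have hg : |γ e'| = 1 := by
              rcases hsign e' (Finset.mem_filter.mp he').1 with h | h <;> rw [h] <;> norm_num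
            rw [abs_mul, hg, one_mul, Finset.abs_prod]
    have hsum_le : ∑ e' ∈ F, ∏ u' ∈ e'.erase v, |x u'| ≤ (F.card : ℝ) * m^(k-1) := by
      calc ∑ e' ∈ F, ∏ u' ∈ e'.erase v, |x u'| ≤ ∑ _e' ∈ F, m^(k-1) :=
            Finset.sum_le_sum hle
        _ = (F.card : ℝ) * m^(k-1) := by rw [Finset.sum_const, nsmul_eq_mul]
    have heqsum : ∀ e' ∈ F, ∏ u' ∈ e'.erase v, |x u'| = m^(k-1) := by
      have h0 : ∑ e' ∈ F, (m^(k-1) - ∏ u' ∈ e'.erase v, |x u'|) = 0 := by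
        rw [Finset.sum_sub_distrib, Finset.sum_const, nsmul_eq_mul]
        linarith [le_antisymm hsum_le habs]
      intro e' he'
      have := (Finset.sum_eq_zero_iff_of_nonneg
        (fun e' he' => sub_nonneg.mpr (hle e' he'))).mp h0 e' he'
      linarith [this]
    by_cases huv : u = v
    · rwa [huv]
    · have hu' : u ∈ e.erase v := Finset.mem_erase.mpr ⟨huv, hu⟩
      by_contra hne
      have hlt : |x u| < m := lt_of_le_of_ne (hmax u) hne
      have hposall : ∀ w ∈ e.erase v, 0 < |x w| := by
        intro w hw
        rcases lt_or_eq_of_le (abs_nonneg (x w)) with h | h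
        · exact h
        · exfalso
          have hz : ∏ u' ∈ e.erase v, |x u'| = 0 := Finset.prod_eq_zero hw h.symm
          rw [heqsum e heF] at hz
          exact (pow_pos m_pos (k-1)).ne' hz
      have hstrict : ∏ w ∈ e.erase v, |x w| < ∏ _w ∈ e.erase v, m :=
        Finset.prod_lt_prod hposall (fun w _ => hmax w) ⟨u, hu', hlt⟩
      rw [Finset.prod_const, hcardE e heF, heqsum e heF] at hstrict
      exact lt_irrefl _ hstrict
  -- propagate by connectivity
  have hall : ∀ u, |x u| = m := by
    intro u
    obtain ⟨p⟩ := hconn.preconnected (Sum.inl v₀) (Sum.inl u)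
    exact walk_prop (fun v => |x v| = m)
      (fun v hv e hve u' hu' => hstep v hv e.1 e.2 hve u' hu') p rfl
  -- the bipartition
  refine ⟨Finset.univ.filter (fun v => x v < 0), ?_⟩
  intro e he
  have hepos : 0 < e.card := (hE e he) ▸ Nat.pos_of_ne_zero (NeZero.ne k)
  obtain ⟨v, hve⟩ := Finset.card_pos.mp hepos
  set F := E.filter (fun e => v ∈ e) with hF
  have heF : e ∈ F := Finset.mem_filter.mpr ⟨he, hve⟩
  have h1 := heq v
  -- multiply by x v
  have h2 : ((F.card : ℝ)) * x v ^ k + ∑ e' ∈ F, γ e' * ∏ u ∈ e', x u = 0 := by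
    have h3 := congrArg (fun t => x v * t) h1
    simp only [mul_zero, mul_add, Finset.mul_sum] at h3
    have hps : x v ^ k = x v * x v ^ (k - 1) := by
      conv_lhs => rw [← hk1]
      rw [pow_succ]; ring
    have h4 : x v * ((F.card : ℝ) * x v ^ (k-1)) = (F.card : ℝ) * x v ^ k := by
      rw [hps]; ring
    have h5 : ∀ e' ∈ F, x v * (γ e' * ∏ u ∈ e'.erase v, x u) = γ e' * ∏ u ∈ e', x u := by
      intro e' he'
      rw [← Finset.mul_prod_erase e' x (Finset.mem_filter.mp he').2]
      ring
    rw [h4, Finset.sum_congr rfl h5] at h3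
    exact h3
  have hxvk : x v ^ k = m ^ k := by rw [← hk.pow_abs, hall v]
  have h6 : ∑ e' ∈ F, (m^k + γ e' * ∏ u ∈ e', x u) = 0 := by
    rw [Finset.sum_add_distrib, Finset.sum_const, nsmul_eq_mul]
    rw [hxvk] at h2
    linarith [h2]
  have habs' : ∀ e' ∈ F, |γ e' * ∏ u ∈ e', x u| = m^k := by
    intro e' he'
    obtain ⟨he'E, -⟩ := Finset.mem_filter.mp he'
    have hg : |γ e'| = 1 := by
      rcases hsign e' he'E with h | h <;> rw [h] <;> norm_num
    rw [abs_mul, hg, one_mul, Finset.abs_prod,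
      Finset.prod_congr rfl (fun u _ => hall u), Finset.prod_const, hE e' he'E]
  have h7 := (Finset.sum_eq_zero_iff_of_nonneg (fun e' he' => by
    have := habs' e' he'
    have := neg_abs_le (γ e' * ∏ u ∈ e', x u)
    linarith)).mp h6 e heF
  have h8 : γ e * ∏ u ∈ e, x u = -(m^k) := by linarith [h7]
  have hprod : ∏ u ∈ e, x u
      = (-1:ℝ)^((e ∩ Finset.univ.filter (fun v => x v < 0)).card) * m^k := by
    rw [prod_sign e (fun u _ => hall u), hE e he, inter_filter_eq]
  rw [hprod] at h8
  have hmk : (m:ℝ)^k ≠ 0 := (pow_pos m_pos k).ne'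
  apply mul_right_cancel₀ hmk
  rw [mul_assoc, h8]
  ring

/-- Backward direction: the bipartition yields an eigenvector for `0`. -/
lemma backward_eig (k : ℕ) [NeZero k] (hk : Even k)
    (E : Finset (Finset V)) (hE : ∀ e ∈ E, e.card = k) (hNE : Nonempty V)
    (γ : Finset V → ℝ) (Vm : Finset V)
    (hcond : ∀ e ∈ E, γ e * (-1:ℝ)^((e ∩ Vm).card) = -1) :
    ∃ x : V → ℝ, x ≠ 0 ∧ ∀ v : V,
      ((E.filter fun e => v ∈ e).card : ℝ) * x v ^ (k-1)
        + ∑ e ∈ E.filter (fun e => v ∈ e), γ e * ∏ u ∈ e.erase v, x u = 0 := by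
  set x : V → ℝ := fun v => if v ∈ Vm then (-1:ℝ) else 1 with hxdef
  have habs1 : ∀ v, |x v| = 1 := by
    intro v; simp only [hxdef]; split <;> norm_num
  have hsq : ∀ v, x v * x v = 1 := by
    intro v; simp only [hxdef]; split <;> norm_num
  have hxne : x ≠ 0 := by
    intro h0
    obtain ⟨v⟩ := hNE
    have h1 : x v = 0 := by rw [h0]; rfl
    have h2 := hsq v
    rw [h1] at h2
    norm_num at h2
  have hodd : Odd (k - 1) :=
    Nat.Even.sub_odd (Nat.one_le_iff_ne_zero.mpr (NeZero.ne k)) hk (by norm_num)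
  have hfilter : ∀ e : Finset V, e.filter (fun u => x u < 0) = e ∩ Vm := by
    intro e
    rw [← inter_filter_eq]
    congr 1
    ext u
    simp only [Finset.mem_filter, Finset.mem_univ, true_and, hxdef]
    split <;> norm_num
    · next h => exact h
    · next h => exact h
  have hedge : ∀ e ∈ E, γ e * ∏ u ∈ e, x u = -1 := by
    intro e he
    rw [prod_sign e (fun u _ => habs1 u), hfilter, one_pow, mul_one]
    exact hcond e he
  refine ⟨x, hxne, ?_⟩
  intro v
  have hterm : ∀ e ∈ E.filter (fun e => v ∈ e), γ e * ∏ u ∈ e.erase v, x u = -(x v) := by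
    intro e he
    obtain ⟨heE, hve⟩ := Finset.mem_filter.mp he
    have h1 : ∏ u ∈ e.erase v, x u = x v * ∏ u ∈ e, x u := by
      rw [← Finset.mul_prod_erase e x hve, ← mul_assoc, hsq v, one_mul]
    rw [h1, show γ e * (x v * ∏ u ∈ e, x u) = x v * (γ e * ∏ u ∈ e, x u) by ring,
      hedge e heE, mul_neg_one]
  rw [Finset.sum_congr rfl hterm, Finset.sum_const, nsmul_eq_mul]
  have hpow : x v ^ (k - 1) = x v := by
    simp only [hxdef]
    split
    · rw [hodd.neg_one_pow]
    · rw [one_pow]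
  rw [hpow]
  ring

end AuxLemmas

/-- for a connected `k`-uniform oriented hypergraph `G^σ` with `k` even,
`0` is an H-eigenvalue of `L(ΓG^σ)` iff there is a bipartition `{V⁺, V⁻}` of the vertices
such that every positive edge meets `V⁻` in an odd number of vertices and every negative
edge meets `V⁻` in an even number of vertices. -/
theorem zero_H_eigenvalue_iff_bipartition [Fintype V] [DecidableEq V]
    (k : ℕ) [NeZero k] (hk : Even k) (E : Finset (Finset V)) (hE : ∀ e ∈ E, e.card = k)
    (hconn : HConnectedF E) (σ : Finset V → V → ℝ) (hσ : IsIncidenceOrientation E σ) :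
    (∃ x : V → ℝ, IsTensorEigenpair ℝ k (lapT k E (inducedSign k σ)) 0 x) ↔
      ∃ Vm : Finset V, ∀ e ∈ E,
        (inducedSign k σ e = 1 → Odd ((e ∩ Vm).card)) ∧
        (inducedSign k σ e = -1 → Even ((e ∩ Vm).card)) := by
  have hsign : ∀ e ∈ E, inducedSign k σ e = 1 ∨ inducedSign k σ e = -1 :=
    fun e he => sign_pm k hσ he
  constructor
  · rintro ⟨x, hpair⟩
    obtain ⟨hx, heq⟩ := (eigen_zero_iff k E hE (inducedSign k σ) x).mp hpair
    obtain ⟨Vm, hVm⟩ := forward_bip k hk E hE hconn (inducedSign k σ) hsign x hx heq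
    exact ⟨Vm, fun e he => (cond_iff (hsign e he) _).mpr (hVm e he)⟩
  · rintro ⟨Vm, hVm⟩
    obtain ⟨x, hx, heq⟩ := backward_eig k hk E hE (nonempty_V hE hconn) (inducedSign k σ) Vm
      (fun e he => (cond_iff (hsign e he) _).mp (hVm e he))
    exact ⟨x, (eigen_zero_iff k E hE (inducedSign k σ) x).mpr ⟨hx, heq⟩⟩
end
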